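/- For every δ > 1, the approximate potential ψ_δ is three times continuously differentiable on ℝ, and its third derivative is given by ψ_δ'''(s) = 6 s · ξ_δ(|s|) for all s ∈ ℝ. -/

import Mathlib

/-- `ζ(s) = 0` for `s ≤ 0` and `ζ(s) = exp(−1/s²)` for `s > 0`. -/
noncomputable def zeta (s : ℝ) : ℝ :=
  if s ≤ 0 then 0 else Real.exp (-(1 / s ^ 2))

/-- The transition function `ξ_δ`. -/
noncomputable def xi (δ : ℝ) (s : ℝ) : ℝ :=
  if s ≤ δ then 1
  else if s < δ + 1 then zeta (1 + s - δ) * zeta (1 + δ - s) / (zeta 1) ^ 2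
  else 0

/-- The approximate potential
`ψ_δ(s) = ¼ − ½ s² + 6 ∫₀ˢ ∫₀ˣ ∫₀ʸ z ξ_δ(|z|) dz dy dx`. -/
noncomputable def psiDelta (δ : ℝ) (s : ℝ) : ℝ :=
  1 / 4 - (1 / 2) * s ^ 2 +
    6 * ∫ x in (0 : ℝ)..s, (∫ y in (0 : ℝ)..x, (∫ z in (0 : ℝ)..y, z * xi δ |z|))

lemma zeta_eq (s : ℝ) : zeta s = expNegInvGlue (s * |s|) := by
  rcases le_or_gt s 0 with h | h
  · rw [zeta, if_pos h, expNegInvGlue, if_pos (mul_nonpos_iff.mpr (Or.inr ⟨h, abs_nonneg s⟩))]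
  · rw [zeta, if_neg (not_le.mpr h), expNegInvGlue, if_neg, abs_of_pos h,
      show s * s = s ^ 2 by ring, one_div]
    push_neg
    exact mul_pos h (abs_pos.mpr h.ne')

lemma zeta_continuous : Continuous zeta := by
  simp only [funext zeta_eq]
  exact (expNegInvGlue.contDiff (n := 0)).continuous.comp (continuous_id.mul continuous_abs)

lemma zeta_one_ne : zeta 1 ≠ 0 := by
  rw [zeta, if_neg (by norm_num)]
  exact Real.exp_ne_zero _

lemma xi_eq (δ s : ℝ) :
    xi δ s = if s ≤ δ then 1 else zeta (1 + s - δ) * zeta (1 + δ - s) / (zeta 1) ^ 2 := by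
  rw [xi]
  rcases le_or_gt s δ with h | h
  · simp [h]
  rcases lt_or_ge s (δ + 1) with h2 | h2
  · simp [h2, not_le.mpr h]
  · rw [if_neg (not_le.mpr h), if_neg (not_lt.mpr h2), if_neg (not_le.mpr h)]
    have : zeta (1 + δ - s) = 0 := by rw [zeta, if_pos (by linarith)]
    rw [this, mul_zero, zero_div]

lemma xi_continuous (δ : ℝ) : Continuous (xi δ) := by
  simp only [funext (xi_eq δ)]
  refine Continuous.if_le ?_ ?_ continuous_id continuous_const ?_
  · exact continuous_const
  · exact ((zeta_continuous.comp (by continuity)).mul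
      (zeta_continuous.comp (by continuity))).div_const _
  · intro s hs
    subst hs
    have h1 : (1 : ℝ) + s - s = 1 := by ring
    rw [h1, sq, div_self (mul_ne_zero zeta_one_ne zeta_one_ne)]

/-- For every `δ > 1`, the approximate potential `ψ_δ` is three times continuously
differentiable on `ℝ`, and `ψ_δ'''(s) = 6 s ξ_δ(|s|)` for all `s ∈ ℝ`. -/
theorem psiDelta_contDiff_three (δ : ℝ) (hδ : 1 < δ) :
    ContDiff ℝ 3 (psiDelta δ) ∧
      ∀ s : ℝ, iteratedDeriv 3 (psiDelta δ) s = 6 * s * xi δ |s| := by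
  set F₀ : ℝ → ℝ := fun z => z * xi δ |z| with hF₀
  have hc₀ : Continuous F₀ := continuous_id.mul ((xi_continuous δ).comp continuous_abs)
  set F₁ : ℝ → ℝ := fun y => ∫ z in (0:ℝ)..y, F₀ z with hF₁
  have hd₁ : ∀ y, HasDerivAt F₁ (F₀ y) y := fun y =>
    (hc₀.integral_hasStrictDerivAt 0 y).hasDerivAt
  have hdf₁ : Differentiable ℝ F₁ := fun y => (hd₁ y).differentiableAt
  have hc₁ : Continuous F₁ := hdf₁.continuous
  set F₂ : ℝ → ℝ := fun x => ∫ y in (0:ℝ)..x, F₁ y with hF₂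
  have hd₂ : ∀ x, HasDerivAt F₂ (F₁ x) x := fun x =>
    (hc₁.integral_hasStrictDerivAt 0 x).hasDerivAt
  have hdf₂ : Differentiable ℝ F₂ := fun x => (hd₂ x).differentiableAt
  have hc₂ : Continuous F₂ := hdf₂.continuous
  set F₃ : ℝ → ℝ := fun s => ∫ x in (0:ℝ)..s, F₂ x with hF₃
  have hd₃ : ∀ s, HasDerivAt F₃ (F₂ s) s := fun s =>
    (hc₂.integral_hasStrictDerivAt 0 s).hasDerivAt
  have hpsi : psiDelta δ = fun s => 1 / 4 - (1 / 2) * s ^ 2 + 6 * F₃ s := rfl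
  -- derivatives of psiDelta
  have hD1 : ∀ s, HasDerivAt (psiDelta δ) (-s + 6 * F₂ s) s := by
    intro s
    rw [hpsi]
    have h := (((hasDerivAt_pow 2 s).const_mul ((1:ℝ)/2)).const_sub (1/4)).add
      ((hd₃ s).const_mul 6)
    refine h.congr_deriv ?_
    push_cast
    ring
  have hD2 : ∀ s, HasDerivAt (fun s => -s + 6 * F₂ s) (-1 + 6 * F₁ s) s := fun s =>
    (hasDerivAt_id s).neg.add ((hd₂ s).const_mul 6)
  have hD3 : ∀ s, HasDerivAt (fun s => -1 + 6 * F₁ s) (6 * F₀ s) s := fun s =>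
    ((hd₁ s).const_mul 6).const_add (-1)
  have hderiv1 : deriv (psiDelta δ) = fun s => -s + 6 * F₂ s := funext fun s => (hD1 s).deriv
  have hderiv2 : deriv (fun s => -s + 6 * F₂ s) = fun s => -1 + 6 * F₁ s :=
    funext fun s => (hD2 s).deriv
  have hderiv3 : deriv (fun s : ℝ => -1 + 6 * F₁ s) = fun s => 6 * F₀ s :=
    funext fun s => (hD3 s).deriv
  constructor
  · rw [show (3 : WithTop ℕ∞) = 2 + 1 by rfl, contDiff_succ_iff_deriv]
    refine ⟨fun s => (hD1 s).differentiableAt, by simp, ?_⟩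
    rw [hderiv1, show (2 : WithTop ℕ∞) = 1 + 1 by rfl, contDiff_succ_iff_deriv]
    refine ⟨fun s => (hD2 s).differentiableAt, by simp, ?_⟩
    rw [hderiv2, show (1 : WithTop ℕ∞) = 0 + 1 by rfl, contDiff_succ_iff_deriv]
    refine ⟨fun s => (hD3 s).differentiableAt, by simp, ?_⟩
    rw [hderiv3, contDiff_zero]
    exact continuous_const.mul hc₀
  · intro s
    rw [show (3 : ℕ) = 2 + 1 from rfl, iteratedDeriv_succ, iteratedDeriv_succ,
      iteratedDeriv_one, hderiv1, hderiv2, hderiv3]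
    simp only [hF₀]
    ring
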